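/- For every natural number m and every integer i ≥ 1, the sum over q from 0 to m of C(2q,q)·C(2m-2q,m-q)·i/(q+i) (as rational numbers) equals C(2m+2i-1, m+i)/C(2i-1, i). -/

import Mathlib

/-- Central binomial recurrence, cast to ℚ. -/
lemma cb_succ_q (n : ℕ) :
    ((n : ℚ) + 1) * (((2 * n + 2).choose (n + 1) : ℕ) : ℚ)
      = 2 * (2 * (n : ℚ) + 1) * (((2 * n).choose n : ℕ) : ℚ) := by
  have h := Nat.succ_mul_centralBinom_succ n
  simp only [Nat.centralBinom] at h
  have e : 2 * (n + 1) = 2 * n + 2 := by ring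
  rw [e] at h
  have h' := congrArg (fun x : ℕ => (x : ℚ)) h
  push_cast at h'
  linear_combination h'

/-- Value of the binomial in terms of the previous one (ℚ). -/
lemma cb_succ_div (n : ℕ) :
    (((2 * n + 2).choose (n + 1) : ℕ) : ℚ)
      = 2 * (2 * (n : ℚ) + 1) * (((2 * n).choose n : ℕ) : ℚ) / ((n : ℚ) + 1) := by
  have hn : ((n : ℚ) + 1) ≠ 0 := by positivity
  rw [eq_div_iff hn]
  linear_combination cb_succ_q n

lemma sum_step (m i : ℕ) (hi : 1 ≤ i) :
    ((m : ℚ) + i + 1) * ∑ q ∈ Finset.range (m + 1 + 1),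
      ((2 * q).choose q : ℚ) * ((2 * (m + 1) - 2 * q).choose (m + 1 - q) : ℚ) * (i : ℚ) / ((q : ℚ) + i)
    = 2 * (2 * (m : ℚ) + 2 * i + 1) * ∑ q ∈ Finset.range (m + 1),
      ((2 * q).choose q : ℚ) * ((2 * m - 2 * q).choose (m - q) : ℚ) * (i : ℚ) / ((q : ℚ) + i) := by
  have hi0 : (1 : ℚ) ≤ (i : ℚ) := by exact_mod_cast hi
  set g : ℕ → ℚ := fun q =>
    -(i : ℚ) * q * ((2 * q).choose q : ℚ) * ((2 * (m + 1 - q)).choose (m + 1 - q) : ℚ) / ((m : ℚ) + 1)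
    with hg
  have key : ∑ q ∈ Finset.range (m + 1),
      (((m : ℚ) + i + 1) *
          (((2 * q).choose q : ℚ) * ((2 * (m + 1) - 2 * q).choose (m + 1 - q) : ℚ) * (i : ℚ) / ((q : ℚ) + i))
        - 2 * (2 * (m : ℚ) + 2 * i + 1) *
          (((2 * q).choose q : ℚ) * ((2 * m - 2 * q).choose (m - q) : ℚ) * (i : ℚ) / ((q : ℚ) + i)))
      = g (m + 1) - g 0 := by
    rw [← Finset.sum_range_sub g (m + 1)]
    refine Finset.sum_congr rfl ?_
    intro q hq
    simp only [Finset.mem_range] at hq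
    obtain ⟨k, rfl⟩ : ∃ k, m = q + k := ⟨m - q, by omega⟩
    simp only [hg]
    have e1 : 2 * (q + k + 1) - 2 * q = 2 * k + 2 := by omega
    have e2 : q + k + 1 - q = k + 1 := by omega
    have e3 : 2 * (q + k) - 2 * q = 2 * k := by omega
    have e4 : q + k - q = k := by omega
    have e5 : q + k + 1 - (q + 1) = k := by omega
    rw [e1, e2, e3, e4, e5]
    have e6 : 2 * (q + 1) = 2 * q + 2 := by omega
    have e7 : 2 * (k + 1) = 2 * k + 2 := by omega
    rw [e6, e7]
    have hq0 : (0 : ℚ) ≤ (q : ℚ) := Nat.cast_nonneg q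
    have hk0 : (0 : ℚ) ≤ (k : ℚ) := Nat.cast_nonneg k
    have hqi : ((q : ℚ) + i) ≠ 0 := by positivity
    have hqk : ((q : ℚ) + k + 1) ≠ 0 := by positivity
    have hq1 : ((q : ℚ) + 1) ≠ 0 := by positivity
    have hk1 : ((k : ℚ) + 1) ≠ 0 := by positivity
    rw [cb_succ_div k, cb_succ_div q]
    push_cast
    field_simp
    ring
  rw [Finset.sum_range_succ]
  have hgm : g (m + 1) = -(i : ℚ) * ((2 * (m + 1)).choose (m + 1) : ℚ) := by
    simp only [hg]
    have e : m + 1 - (m + 1) = 0 := by omega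
    rw [e]
    have hm1 : ((m : ℚ) + 1) ≠ 0 := by positivity
    field_simp
    push_cast [Nat.choose_self]
    ring
  have hg0 : g 0 = 0 := by simp [hg]
  have elast1 : 2 * (m + 1) - 2 * (m + 1) = 0 := by omega
  have elast2 : m + 1 - (m + 1) = 0 := by omega
  rw [elast1, elast2]
  have hsum := key
  rw [hgm, hg0] at hsum
  have hden : ((m : ℚ) + 1 + i) ≠ 0 := by positivity
  have hexp : (((m : ℕ) + 1 : ℕ) : ℚ) = (m : ℚ) + 1 := by push_cast; ring
  -- turn the sum-of-differences into difference of sums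
  rw [Finset.sum_sub_distrib, ← Finset.mul_sum, ← Finset.mul_sum] at hsum
  -- final algebra
  have hlast : ((m : ℚ) + i + 1) *
      (((2 * (m + 1)).choose (m + 1) : ℚ) * ((0 : ℕ).choose 0 : ℚ) * (i : ℚ) / (((m + 1 : ℕ) : ℚ) + i))
      = (i : ℚ) * ((2 * (m + 1)).choose (m + 1) : ℚ) := by
    have : (((m + 1 : ℕ) : ℚ) + i) ≠ 0 := by push_cast; positivity
    rw [Nat.choose_self]
    field_simp
    push_cast
    ring
  push_cast at hsum hlast ⊢
  linear_combination hsum + hlast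

lemma rhs_rec (m i : ℕ) (hi : 1 ≤ i) :
    ((m : ℚ) + i + 1) * ((2 * (m + 1) + 2 * i - 1).choose (m + 1 + i) : ℚ)
      = 2 * (2 * (m : ℚ) + 2 * i + 1) * ((2 * m + 2 * i - 1).choose (m + i) : ℚ) := by
  obtain ⟨s, hs⟩ : ∃ s, m + i = s + 1 := ⟨m + i - 1, by omega⟩
  have e1 : 2 * (m + 1) + 2 * i - 1 = 2 * (s + 1) + 1 := by omega
  have e2 : m + 1 + i = (s + 1) + 1 := by omega
  have e3 : 2 * m + 2 * i - 1 = 2 * s + 1 := by omega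
  have e4 : m + i = s + 1 := hs
  rw [e1, e2, e3, e4]
  -- Nat facts
  have f1 : (2 * (s + 1) + 1) * (2 * (s + 1)).choose (s + 1)
      = (2 * (s + 1) + 1).choose ((s + 1) + 1) * ((s + 1) + 1) :=
    Nat.add_one_mul_choose_eq (2 * (s + 1)) (s + 1)
  have f2 : (2 * (s + 1)).choose (s + 1) = 2 * ((2 * s + 1).choose (s + 1)) := by
    have ee : 2 * (s + 1) = (2 * s + 1) + 1 := by omega
    rw [ee, Nat.choose_succ_succ]
    have hsym : (2 * s + 1).choose ((2 * s + 1) - (s + 1)) = (2 * s + 1).choose (s + 1) :=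
      Nat.choose_symm (by omega)
    have ee2 : (2 * s + 1) - (s + 1) = s := by omega
    rw [ee2] at hsym
    simp only [Nat.succ_eq_add_one] at *
    omega
  have hmi : (m : ℚ) + i = (s : ℚ) + 1 := by
    have := congrArg (fun x : ℕ => (x : ℚ)) hs
    push_cast at this
    linarith
  have f1' := congrArg (fun x : ℕ => (x : ℚ)) f1
  have f2' := congrArg (fun x : ℕ => (x : ℚ)) f2
  push_cast at f1' f2'
  linear_combination
    ((((2 * (s + 1) + 1).choose (s + 1 + 1) : ℕ) : ℚ)
      - 4 * (((2 * s + 1).choose (s + 1) : ℕ) : ℚ)) * hmi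
    - f1' + (2 * (s : ℚ) + 3) * f2'

theorem gould_identity (m i : ℕ) (hi : 1 ≤ i) :
    ∑ q ∈ Finset.range (m + 1),
      ((2 * q).choose q : ℚ) * ((2 * m - 2 * q).choose (m - q) : ℚ) * (i : ℚ) / ((q : ℚ) + i)
    = ((2 * m + 2 * i - 1).choose (m + i) : ℚ) / ((2 * i - 1).choose i : ℚ) := by
  have hi0 : (i : ℚ) ≠ 0 := by
    have : 0 < i := hi
    positivity
  have hD : (((2 * i - 1).choose i : ℕ) : ℚ) ≠ 0 := by
    have : 0 < (2 * i - 1).choose i := Nat.choose_pos (by omega)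
    positivity
  induction m with
  | zero =>
    norm_num [Finset.sum_range_one]
    rw [div_self hi0, div_self hD]
  | succ m ih =>
    have h1 := sum_step m i hi
    have h2 := rhs_rec m i hi
    have hmi : ((m : ℚ) + i + 1) ≠ 0 := by positivity
    apply mul_left_cancel₀ hmi
    rw [h1, ih]
    field_simp
    linear_combination -h2
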